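/- Let G⃗ be a directed graph with maximum indegree Δ⁻(G⃗), let a, b be integers, and let Λ⃗ be an (a,b)-augmentation of G⃗. Then there exists an arc coloring of G⃗ using at most (2Δ⁻(Λ⃗) + 1) · Δ⁻(G⃗) colors such that whenever P⃗_1 is a directed path from a vertex x to a vertex z and P⃗_2 is a directed path from a vertex y to z, with no internal vertex or arc of P⃗_1 belonging to P⃗_2 and vice versa, and P⃗_1 has at most a+1 arcs and P⃗_2 has at most b+1 arcs, all the arcs of P⃗_1 ∪ P⃗_2 receive different colors. -/

import Mathlib

open scoped Classical

universe u v

/-- A rooted forest given by its ancestor order: `le x y` means `x` is an ancestor of `y`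
(or `x = y`); ancestors of any vertex form a chain. -/
structure RootedForest (V : Type u) where
  le : V → V → Prop
  le_refl : ∀ x, le x x
  le_antisymm : ∀ x y, le x y → le y x → x = y
  le_trans : ∀ x y z, le x y → le y z → le x z
  ancestors_chain : ∀ x y z, le x z → le y z → le x y ∨ le y x

/-- The closure of a rooted forest: each vertex is joined to all its proper ancestors. -/
def RootedForest.clos {V : Type u} (F : RootedForest V) : SimpleGraph V where
  Adj x y := x ≠ y ∧ (F.le x y ∨ F.le y x)
  symm := by
    constructor
    rintro x y ⟨h1, h2⟩
    exact ⟨h1.symm, h2.symm⟩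
  loopless := ⟨fun x h => h.1 rfl⟩

/-- The height of a rooted forest: maximum number of vertices on a root-to-vertex path. -/
noncomputable def RootedForest.height {V : Type u} [Fintype V] (F : RootedForest V) : ℕ :=
  Finset.univ.sup fun x => (Finset.univ.filter fun y => F.le y x).card

/-- Tree-depth: minimum height of a rooted forest whose closure contains `G`. -/
noncomputable def treeDepth {V : Type u} [Fintype V] (G : SimpleGraph V) : ℕ :=
  sInf {n : ℕ | ∃ F : RootedForest V, G ≤ F.clos ∧ F.height ≤ n}

/-- `H` is a `k`-tree: there is a construction order in which every vertex is added
adjacent to a clique of size at most `k` among the earlier vertices. -/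
def IsKTree {V : Type u} (k : ℕ) (H : SimpleGraph V) : Prop :=
  ∃ r : V → V → Prop, IsStrictTotalOrder V r ∧
    ∀ x : V, H.IsClique {y | r y x ∧ H.Adj y x} ∧ {y | r y x ∧ H.Adj y x}.ncard ≤ k

/-- Tree-width: minimum `k` such that `G` is a subgraph of a `k`-tree. -/
noncomputable def treeWidth {V : Type u} [Fintype V] (G : SimpleGraph V) : ℕ :=
  sInf {k : ℕ | ∃ H : SimpleGraph V, G ≤ H ∧ IsKTree k H}

/-- A `p`-centered coloring: every connected subgraph either has a color appearing
exactly once, or receives at least `p` colors. -/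
def IsCenteredColoring {V : Type u} {α : Type v} (p : ℕ) (G : SimpleGraph V)
    (c : V → α) : Prop :=
  ∀ S : Set V, (G.induce S).Connected →
    (∃ x ∈ S, ∀ y ∈ S, c y = c x → y = x) ∨ p ≤ (c '' S).ncard

/-- A class of (finite) graphs. -/
def GraphClass : Type 1 := ∀ (V : Type) [Fintype V], SimpleGraph V → Prop

def HasLowTreeWidthColorings (C : GraphClass) : Prop :=
  ∀ p : ℕ, 1 ≤ p → ∃ N : ℕ, ∀ (V : Type) [Fintype V], ∀ G : SimpleGraph V, C V G →
    ∃ c : V → Fin N, ∀ I : Finset (Fin N), I.card ≤ p →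
      ∀ K : (G.induce {v | c v ∈ I}).ConnectedComponent,
        treeWidth ((G.induce {v | c v ∈ I}).induce K.supp) ≤ I.card - 1

def HasLowTreeDepthColorings (C : GraphClass) : Prop :=
  ∀ p : ℕ, 1 ≤ p → ∃ N : ℕ, ∀ (V : Type) [Fintype V], ∀ G : SimpleGraph V, C V G →
    ∃ c : V → Fin N, ∀ I : Finset (Fin N), I.card ≤ p →
      ∀ K : (G.induce {v | c v ∈ I}).ConnectedComponent,
        treeDepth ((G.induce {v | c v ∈ I}).induce K.supp) ≤ I.card

/-- `χ_p(G)`: minimum number of colors such that any `i < p` color classes induce a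
subgraph of tree-depth at most `i`. -/
noncomputable def chiP {V : Type u} [Fintype V] (p : ℕ) (G : SimpleGraph V) : ℕ :=
  sInf {N : ℕ | ∃ c : V → Fin N, ∀ I : Finset (Fin N), I.card < p →
    treeDepth (G.induce {v | c v ∈ I}) ≤ I.card}

/-- `H` is a minor of `G`: disjoint connected branch sets, one per vertex of `H`,
joined by edges of `G` as prescribed by the edges of `H`. -/
def IsMinorOf {W : Type v} {V : Type u} (H : SimpleGraph W) (G : SimpleGraph V) : Prop :=
  ∃ B : W → Set V, (∀ w, (G.induce (B w)).Connected) ∧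
    (Pairwise fun w w' => Disjoint (B w) (B w')) ∧
    ∀ w w', H.Adj w w' → ∃ u ∈ B w, ∃ x ∈ B w', G.Adj u x

/-- The Hadwiger number: largest `n` with `K_n` a minor of `G`. -/
noncomputable def hadwiger {V : Type u} [Fintype V] (G : SimpleGraph V) : ℕ :=
  sSup {n : ℕ | IsMinorOf (⊤ : SimpleGraph (Fin n)) G}

/-- The grad `∇(G)`: maximum of `|E(H)|/|V(H)|` over minors `H` of `G`. -/
noncomputable def gradMax {V : Type u} [Fintype V] (G : SimpleGraph V) : ℝ :=
  sSup {x : ℝ | ∃ (W : Type) (_ : Finite W) (H : SimpleGraph W),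
    IsMinorOf H G ∧ x = (H.edgeSet.ncard : ℝ) / (Nat.card W : ℝ)}

/-- The quotient of `G` by a family of balls. -/
def quotientGraph {V : Type u} (G : SimpleGraph V) {p : ℕ} (B : Fin p → Set V) :
    SimpleGraph (Fin p) where
  Adj i j := i ≠ j ∧ ((B i ∩ B j).Nonempty ∨ ∃ u ∈ B i, ∃ x ∈ B j, G.Adj u x)
  symm := by
    constructor
    rintro i j ⟨hij, h⟩
    refine ⟨hij.symm, ?_⟩
    rcases h with h | ⟨u, hu, x, hx, huv⟩
    · exact Or.inl (by rwa [Set.inter_comm])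
    · exact Or.inr ⟨x, hx, u, hu, huv.symm⟩
  loopless := ⟨fun i h => h.1 rfl⟩

/-- A family of balls of radius at most `r` and complexity at most `c`. -/
def IsBallFamily {V : Type u} (G : SimpleGraph V) (r c : ℕ) {p : ℕ}
    (B : Fin p → Set V) : Prop :=
  (∀ i, (G.induce (B i)).Connected ∧
    ∃ x : B i, ∀ y : B i, (G.induce (B i)).dist x y ≤ r) ∧
  ∀ v : V, ({i | v ∈ B i} : Set (Fin p)).ncard ≤ c

/-- The grad `∇^c_r(G)` of `G` with rank `r` and complexity `c`. -/
noncomputable def gradCR {V : Type u} [Fintype V] (c r : ℕ) (G : SimpleGraph V) : ℝ :=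
  sSup {x : ℝ | ∃ (p : ℕ) (B : Fin p → Set V), IsBallFamily G r c B ∧
    x = ((quotientGraph G B).edgeSet.ncard : ℝ) / (p : ℝ)}

/-- The grad `∇_r(G)` of `G` with rank `r`. -/
noncomputable def gradR {V : Type u} [Fintype V] (r : ℕ) (G : SimpleGraph V) : ℝ :=
  gradCR 1 r G

def HasBoundedExpansion (C : GraphClass) : Prop :=
  ∃ f : ℕ → ℝ, ∀ (V : Type) [Fintype V], ∀ G : SimpleGraph V, C V G →
    ∀ r : ℕ, gradR r G ≤ f r

/-- The lexicographic product of two graphs. -/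
def lexProd {V : Type u} {W : Type v} (G : SimpleGraph V) (H : SimpleGraph W) :
    SimpleGraph (V × W) where
  Adj a b := G.Adj a.1 b.1 ∨ (a.1 = b.1 ∧ H.Adj a.2 b.2)
  symm := by
    constructor
    rintro a b (h | ⟨h1, h2⟩)
    · exact Or.inl h.symm
    · exact Or.inr ⟨h1.symm, h2.symm⟩
  loopless := by
    constructor
    rintro a (h | ⟨h1, h2⟩)
    · exact G.loopless.irrefl a.1 h
    · exact H.loopless.irrefl a.2 h2

/-- A loopless directed graph with at most one arc in each direction between two vertices. -/
structure Digr (V : Type u) where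
  Adj : V → V → Prop
  irrefl : ∀ x, ¬ Adj x x

/-- The underlying simple graph of a digraph. -/
def Digr.toSimple {V : Type u} (D : Digr V) : SimpleGraph V where
  Adj x y := D.Adj x y ∨ D.Adj y x
  symm := ⟨fun x y h => h.symm⟩
  loopless := ⟨fun x h => h.elim (D.irrefl x) (D.irrefl x)⟩

/-- Maximum indegree of a set of arcs (a binary relation). -/
noncomputable def inDegMax {V : Type u} [Fintype V] (R : V → V → Prop) : ℕ :=
  Finset.univ.sup fun y => (Finset.univ.filter fun x => R x y).card

def listArcs {V : Type u} (l : List V) : List (V × V) := l.zip l.tail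

def internalVerts {V : Type u} (l : List V) : List V := l.tail.dropLast

/-- `l` is (the vertex list of) a directed path in `D`. -/
def IsDiPath {V : Type u} (D : Digr V) (l : List V) : Prop :=
  l ≠ [] ∧ l.Nodup ∧ l.Chain' D.Adj

/-- `l` is a directed path in `D` from `x` to `z`. -/
def DiPathBetween {V : Type u} (D : Digr V) (l : List V) (x z : V) : Prop :=
  IsDiPath D l ∧ l.head? = some x ∧ l.getLast? = some z

/-- No internal vertex or arc of one path belongs to the other. -/
def SeparatedPair {V : Type u} (l1 l2 : List V) : Prop :=
  (∀ v ∈ internalVerts l1, v ∉ l2) ∧ (∀ v ∈ internalVerts l2, v ∉ l1) ∧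
  ∀ e ∈ listArcs l1, e ∉ listArcs l2

/-- `y` is `(a,b)`-reachable from `x` in `D`. -/
def ABReachable {V : Type u} (D : Digr V) (a b : ℕ) (x y : V) : Prop :=
  x ≠ y ∧ ∃ (z : V) (l1 l2 : List V),
    DiPathBetween D l1 x z ∧ DiPathBetween D l2 y z ∧
    l1.length ≤ a + 1 ∧ l2.length ≤ b + 1 ∧ SeparatedPair l1 l2

/-- `L` is an `(a,b)`-augmentation of `D`. -/
def IsAugmentation {V : Type u} (D : Digr V) (a b : ℕ) (L : V → V → Prop) : Prop :=
  ∀ x y, ABReachable D a b x y → L x y ∨ L y x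

/-- `H` is a `1`-transitive fraternal augmentation of `D`. -/
def IsOneTFA {V : Type u} (D H : Digr V) : Prop :=
  (∀ x y, D.Adj x y → H.Adj x y) ∧
  (∀ x y z, x ≠ y → D.Adj x z → D.Adj z y → H.Adj x y) ∧
  (∀ x y z, x ≠ y → D.Adj x z → D.Adj y z → H.Adj x y ∨ H.Adj y x)

/-- `Gs` (indexed from `1`) is a transitive fraternal augmentation of `D`. -/
def IsTFASeq {V : Type u} (D : Digr V) (Gs : ℕ → Digr V) : Prop :=
  Gs 1 = D ∧ ∀ i, 1 ≤ i → IsOneTFA (Gs i) (Gs (i + 1))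

/-- `D` is an orientation of the graph `G`. -/
def IsOrientationOf {V : Type u} (D : Digr V) (G : SimpleGraph V) : Prop :=
  (∀ x y, D.Adj x y → ¬ D.Adj y x) ∧ D.toSimple = G

/-- An acyclically oriented clique of size `p` in a digraph. -/
def AcyclicOrientedClique {V : Type u} (H : Digr V) (S : Set V) (p : ℕ) : Prop :=
  S.ncard = p ∧ (∀ x ∈ S, ∀ y ∈ S, x ≠ y → H.Adj x y ∨ H.Adj y x) ∧
  ∀ x : V, ¬ Relation.TransGen (fun a b => a ∈ S ∧ b ∈ S ∧ H.Adj a b) x x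

section AuxArcs

variable {V : Type u}

lemma listArcs_cons_cons (a b : V) (t : List V) :
    listArcs (a :: b :: t) = (a, b) :: listArcs (b :: t) := rfl

lemma exists_decomp_of_mem_listArcs {l : List V} {u v : V}
    (h : (u, v) ∈ listArcs l) : ∃ s t, l = s ++ u :: v :: t := by
  induction l with
  | nil => simp [listArcs] at h
  | cons a l ih =>
    cases l with
    | nil => simp [listArcs] at h
    | cons b t =>
      rw [listArcs_cons_cons] at h
      rcases List.mem_cons.1 h with h | h
      · obtain ⟨rfl, rfl⟩ : u = a ∧ v = b := by simpa [Prod.ext_iff] using h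
        exact ⟨[], t, rfl⟩
      · obtain ⟨s, t', hst⟩ := ih h
        exact ⟨a :: s, t', by simp [hst]⟩

lemma listArcs_cons' (a : V) {l : List V} (h : l ≠ []) :
    listArcs (a :: l) = (a, l.head h) :: listArcs l := by
  cases l with
  | nil => simp at h
  | cons b t => rfl

lemma listArcs_append (s : List V) (x : V) (t : List V) :
    listArcs (s ++ x :: t) = listArcs (s ++ [x]) ++ listArcs (x :: t) := by
  induction s with
  | nil => simp [listArcs]
  | cons a s ih =>
    have h1 : s ++ x :: t ≠ [] := by simp
    have h2 : s ++ [x] ≠ [] := by simp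
    rw [List.cons_append, listArcs_cons' a h1, List.cons_append, listArcs_cons' a h2, ih]
    have hh : (s ++ x :: t).head h1 = (s ++ [x]).head h2 := by
      cases s <;> simp
    rw [hh]
    simp

lemma snd_mem_of_mem_listArcs {l : List V} {u v : V} (h : (u, v) ∈ listArcs l) : v ∈ l := by
  obtain ⟨s, t, rfl⟩ := exists_decomp_of_mem_listArcs h
  simp

lemma rel_of_mem_listArcs {R : V → V → Prop} {l : List V} (hc : l.Chain' R)
    {u v : V} (h : (u, v) ∈ listArcs l) : R u v := by
  obtain ⟨s, t, rfl⟩ := exists_decomp_of_mem_listArcs h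
  have := hc.suffix ⟨s, rfl⟩
  exact (List.isChain_cons_cons.1 this).1

lemma head?_append_left {A : List V} (B : List V) (hA : A ≠ []) :
    (A ++ B).head? = A.head? := by
  cases A with
  | nil => exact absurd rfl hA
  | cons a t => rfl

lemma getLast?_append_right (A : List V) {B : List V} (hB : B ≠ []) :
    (A ++ B).getLast? = B.getLast? := by
  rw [List.getLast?_append]
  cases B with
  | nil => exact absurd rfl hB
  | cons b t =>
    cases hb : (b :: t).getLast? with
    | none => simp at hb
    | some z => rfl

lemma mem_of_head?_eq_some {A : List V} {w : V} (h : A.head? = some w) : w ∈ A := by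
  cases A with
  | nil => simp at h
  | cons a t =>
    obtain rfl : a = w := by simpa using h
    exact List.mem_cons_self

lemma mem_internalVerts_iff {l : List V} (hnd : l.Nodup) {w : V} :
    w ∈ internalVerts l ↔ w ∈ l ∧ l.head? ≠ some w ∧ l.getLast? ≠ some w := by
  cases l with
  | nil => simp [internalVerts]
  | cons a t =>
    rcases List.eq_nil_or_concat t with rfl | ⟨m, z, ht⟩
    · simp only [internalVerts]
      simp only [List.tail_cons, List.dropLast_nil, List.not_mem_nil, false_iff]
      rintro ⟨h1, h2, h3⟩
      simp only [List.mem_singleton] at h1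
      simp [h1] at h2
    · rw [List.concat_eq_append] at ht
      subst ht
      have hiv : internalVerts (a :: (m ++ [z])) = m := by
        simp [internalVerts, List.dropLast_concat]
      have hgl : (a :: (m ++ [z])).getLast? = some z := by
        rw [show a :: (m ++ [z]) = (a :: m) ++ [z] from rfl, List.getLast?_concat]
      have ha : a ∉ m ++ [z] := (List.nodup_cons.1 hnd).1
      have hmz : (m ++ [z]).Nodup := (List.nodup_cons.1 hnd).2
      have ham : a ∉ m := fun h => ha (List.mem_append_left _ h)
      have hzm : z ∉ m := by
        have hd := (List.nodup_append.1 hmz).2.2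
        exact fun h => hd z h z (by simp) rfl
      rw [hiv]
      simp only [hgl, List.head?_cons, List.mem_cons, List.mem_append,
        List.mem_singleton, ne_eq, Option.some.injEq]
      constructor
      · intro hw
        exact ⟨Or.inr (Or.inl hw), fun h => ham (by rw [h]; exact hw),
          fun h => hzm (by rw [h]; exact hw)⟩
      · rintro ⟨(rfl | hw | rfl | h), h1, h2⟩
        · exact absurd rfl h1
        · exact hw
        · exact absurd rfl h2
        · simp at h

lemma getLast_not_internal {l : List V} (hnd : l.Nodup) {w : V}
    (h : l.getLast? = some w) : w ∉ internalVerts l :=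
  fun hw => ((mem_internalVerts_iff hnd).1 hw).2.2 h

lemma internal_suffix_mem {s : List V} {u v : V} {t : List V}
    (hnd : (s ++ u :: v :: t).Nodup) {w : V} (hw : w ∈ internalVerts (v :: t)) :
    w ∈ internalVerts (s ++ u :: v :: t) := by
  have hassoc : s ++ u :: v :: t = (s ++ [u]) ++ v :: t := by simp
  rw [hassoc] at hnd ⊢
  have hnd' := List.nodup_append.1 hnd
  obtain ⟨hmem, hhead, hlast⟩ := (mem_internalVerts_iff hnd'.2.1).1 hw
  rw [mem_internalVerts_iff hnd]
  refine ⟨List.mem_append_right _ hmem, ?_, ?_⟩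
  · rw [head?_append_left _ (by simp : (s ++ [u] : List V) ≠ [])]
    intro hh
    exact hnd'.2.2 w (mem_of_head?_eq_some hh) w hmem rfl
  · rw [getLast?_append_right _ (by simp : (v :: t : List V) ≠ [])]
    exact hlast

lemma listArcs_suffix_mem {s : List V} {u v : V} {t : List V} {e : V × V}
    (he : e ∈ listArcs (v :: t)) : e ∈ listArcs (s ++ u :: v :: t) := by
  rw [listArcs_append s u (v :: t), listArcs_cons_cons]
  simp [he]

lemma mem_listArcs_of_getLast : ∀ {A : List V} {p : V}, A.getLast? = some p →
    ∀ (q : V) (B : List V), (p, q) ∈ listArcs (A ++ q :: B)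
  | [], p, h => by simp at h
  | [a], p, h => by
      obtain rfl : a = p := by simpa using h
      intro q B
      rw [show [a] ++ q :: B = a :: q :: B from rfl, listArcs_cons_cons]
      exact List.mem_cons_self
  | a :: a' :: A, p, h => by
      intro q B
      have h' : (a' :: A).getLast? = some p := by
        rwa [List.getLast?_cons_cons] at h
      have hmem := mem_listArcs_of_getLast h' q B
      rw [show (a :: a' :: A) ++ q :: B = a :: ((a' :: A) ++ q :: B) from rfl,
        listArcs_cons' a (by simp)]
      exact List.mem_cons_of_mem _ hmem

end AuxArcs

section AuxPaths

variable {V : Type u}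

lemma diPathBetween_singleton (D : Digr V) (q : V) : DiPathBetween D [q] q q :=
  ⟨⟨by simp, List.nodup_singleton q, List.isChain_singleton q⟩, rfl, rfl⟩

lemma abreach_of_path_left {D : Digr V} {a b : ℕ} {S : List V} {p q : V}
    (hS : DiPathBetween D S p q) (hpq : p ≠ q) (hlen : S.length ≤ a + 1) :
    ABReachable D a b p q := by
  refine ⟨hpq, q, S, [q], hS, diPathBetween_singleton D q, hlen, by simp, ?_, ?_, ?_⟩
  · intro w hw
    simp only [List.mem_singleton]
    rintro rfl
    exact getLast_not_internal hS.1.2.1 hS.2.2 hw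
  · intro w hw
    simp [internalVerts] at hw
  · intro e he
    simp [listArcs]

lemma abreach_of_path_right {D : Digr V} {a b : ℕ} {S : List V} {p q : V}
    (hS : DiPathBetween D S p q) (hpq : p ≠ q) (hlen : S.length ≤ b + 1) :
    ABReachable D a b q p := by
  refine ⟨hpq.symm, q, [q], S, diPathBetween_singleton D q, hS, by simp, hlen, ?_, ?_, ?_⟩
  · intro w hw
    simp [internalVerts] at hw
  · intro w hw
    simp only [List.mem_singleton]
    rintro rfl
    exact getLast_not_internal hS.1.2.1 hS.2.2 hw
  · intro e he
    simp [listArcs] at he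

lemma suffix_path {D : Digr V} {l : List V} {x z u v : V}
    (hp : DiPathBetween D l x z) (he : (u, v) ∈ listArcs l) :
    ∃ m : List V, DiPathBetween D m v z ∧ m.length + 1 ≤ l.length ∧
      (∀ w ∈ internalVerts m, w ∈ internalVerts l) ∧
      (∀ e ∈ listArcs m, e ∈ listArcs l) ∧ (∀ w ∈ m, w ∈ l) := by
  obtain ⟨s, t, rfl⟩ := exists_decomp_of_mem_listArcs he
  obtain ⟨⟨hne, hnd, hch⟩, hhead, hlast⟩ := hp
  have hsuf : (v :: t) <:+ s ++ u :: v :: t := ⟨s ++ [u], by simp⟩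
  have hlast' : (v :: t).getLast? = some z := by
    rwa [show s ++ u :: v :: t = (s ++ [u]) ++ v :: t by simp,
      getLast?_append_right _ (by simp : (v :: t : List V) ≠ [])] at hlast
  refine ⟨v :: t, ⟨⟨by simp, List.Nodup.sublist hsuf.sublist hnd, hch.suffix hsuf⟩,
    rfl, hlast'⟩, by simp, fun w hw => internal_suffix_mem hnd hw,
    fun e he' => listArcs_suffix_mem he', fun w hw => by simp [hw]⟩

lemma seg_core {D : Digr V} {l : List V} (hnd : l.Nodup) (hch : l.Chain' D.Adj)
    {s : List V} {u v : V} {t : List V} (hl : l = s ++ u :: v :: t)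
    {u' v' : V} (hf : (u', v') ∈ listArcs (v :: t)) :
    ∃ S, DiPathBetween D S v v' ∧ S.length + 1 ≤ l.length := by
  subst hl
  obtain ⟨s', t', hdec⟩ := exists_decomp_of_mem_listArcs hf
  have hpre : (s' ++ [u', v'] : List V) <+: v :: t := ⟨t', by rw [hdec]; simp⟩
  have hsuf : (v :: t) <:+ s ++ u :: v :: t := ⟨s ++ [u], by simp⟩
  refine ⟨s' ++ [u', v'], ⟨⟨by simp, ?_, ?_⟩, ?_, ?_⟩, ?_⟩
  · exact List.Nodup.sublist (hpre.sublist.trans hsuf.sublist) hnd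
  · exact (hch.suffix hsuf).prefix hpre
  · have h1 : (s' ++ [u', v'] : List V).head? = ((s' ++ [u', v']) ++ t').head? :=
      (head?_append_left _ (by simp)).symm
    rw [h1, show (s' ++ [u', v']) ++ t' = s' ++ u' :: v' :: t' by simp, ← hdec]
    rfl
  · rw [show s' ++ [u', v'] = (s' ++ [u']) ++ [v'] by simp]
    exact List.getLast?_concat
  · have h1 := congrArg List.length hdec
    simp [List.length_append] at h1 ⊢
    omega

lemma arcs_order {l : List V} (hnd : l.Nodup) {u v u' v' : V}
    (he : (u, v) ∈ listArcs l) (hf : (u', v') ∈ listArcs l) (hvv : v ≠ v') :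
    (∃ s t, l = s ++ u :: v :: t ∧ (u', v') ∈ listArcs (v :: t)) ∨
    (∃ s t, l = s ++ u' :: v' :: t ∧ (u, v) ∈ listArcs (v' :: t)) := by
  obtain ⟨s, t, rfl⟩ := exists_decomp_of_mem_listArcs he
  rw [listArcs_append s u (v :: t), List.mem_append, listArcs_cons_cons, List.mem_cons] at hf
  rcases hf with hf | hf | hf
  · right
    obtain ⟨s2, t2, hst⟩ := exists_decomp_of_mem_listArcs hf
    refine ⟨s2, t2 ++ v :: t, ?_, ?_⟩
    · rw [show s ++ u :: v :: t = (s ++ [u]) ++ v :: t by simp, hst]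
      simp
    · have hlu : (v' :: t2).getLast? = some u := by
        have h1 : (s ++ [u]).getLast? = some u := List.getLast?_concat
        rwa [hst, show s2 ++ u' :: v' :: t2 = (s2 ++ [u']) ++ v' :: t2 by simp,
          getLast?_append_right _ (by simp : (v' :: t2 : List V) ≠ [])] at h1
      have := mem_listArcs_of_getLast hlu v t
      rwa [show (v' :: t2) ++ v :: t = v' :: (t2 ++ v :: t) from by simp] at this
  · obtain ⟨h1, h2⟩ : u' = u ∧ v' = v := by simpa [Prod.ext_iff] using hf
    exact absurd h2.symm hvv
  · exact Or.inl ⟨s, t, rfl, hf⟩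

lemma same_list_reach {D : Digr V} {l : List V} {x z : V} (hp : DiPathBetween D l x z)
    {u v u' v' : V} (he : (u, v) ∈ listArcs l) (hf : (u', v') ∈ listArcs l) (hvv : v ≠ v') :
    (∃ S, DiPathBetween D S v v' ∧ S.length + 1 ≤ l.length) ∨
    (∃ S, DiPathBetween D S v' v ∧ S.length + 1 ≤ l.length) := by
  obtain ⟨⟨hne, hnd, hch⟩, hhead, hlast⟩ := hp
  rcases arcs_order hnd he hf hvv with ⟨s, t, hl, hf'⟩ | ⟨s, t, hl, hf'⟩
  · exact Or.inl (seg_core hnd hch hl hf')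
  · exact Or.inr (seg_core hnd hch hl hf')

lemma key_reach {D : Digr V} {a b : ℕ} {l1 l2 : List V} {x y z : V}
    (hp1 : DiPathBetween D l1 x z) (hp2 : DiPathBetween D l2 y z)
    (h1 : l1.length ≤ a + 2) (h2 : l2.length ≤ b + 2) (hsep : SeparatedPair l1 l2)
    {u v u' v' : V}
    (he : (u, v) ∈ listArcs l1 ++ listArcs l2) (hf : (u', v') ∈ listArcs l1 ++ listArcs l2)
    (hvv : v ≠ v') : ABReachable D a b v v' ∨ ABReachable D a b v' v := by
  rcases List.mem_append.1 he with he | he <;> rcases List.mem_append.1 hf with hf | hf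
  · rcases same_list_reach hp1 he hf hvv with ⟨S, hS, hlen⟩ | ⟨S, hS, hlen⟩
    · exact Or.inl (abreach_of_path_left hS hvv (by omega))
    · exact Or.inr (abreach_of_path_left hS hvv.symm (by omega))
  · obtain ⟨m, hm, hmlen, hmint, hmarcs, hmmem⟩ := suffix_path hp1 he
    obtain ⟨m', hm', hmlen', hmint', hmarcs', hmmem'⟩ := suffix_path hp2 hf
    exact Or.inl ⟨hvv, z, m, m', hm, hm', by omega, by omega,
      fun w hw hwm' => hsep.1 w (hmint w hw) (hmmem' w hwm'),
      fun w hw hwm => hsep.2.1 w (hmint' w hw) (hmmem w hwm),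
      fun e' he' hf' => hsep.2.2 e' (hmarcs e' he') (hmarcs' e' hf')⟩
  · obtain ⟨m, hm, hmlen, hmint, hmarcs, hmmem⟩ := suffix_path hp2 he
    obtain ⟨m', hm', hmlen', hmint', hmarcs', hmmem'⟩ := suffix_path hp1 hf
    exact Or.inr ⟨hvv.symm, z, m', m, hm', hm, by omega, by omega,
      fun w hw hwm => hsep.1 w (hmint' w hw) (hmmem w hwm),
      fun w hw hwm' => hsep.2.1 w (hmint w hw) (hmmem' w hwm'),
      fun e' he' hf' => hsep.2.2 e' (hmarcs' e' he') (hmarcs e' hf')⟩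
  · rcases same_list_reach hp2 he hf hvv with ⟨S, hS, hlen⟩ | ⟨S, hS, hlen⟩
    · exact Or.inr (abreach_of_path_right hS hvv (by omega))
    · exact Or.inl (abreach_of_path_right hS hvv.symm (by omega))

end AuxPaths

section AuxColor

lemma mul_add_inj {p q n1 n2 M : ℕ} (h1 : n1 < M) (h2 : n2 < M)
    (h : p * M + n1 = q * M + n2) : p = q ∧ n1 = n2 := by
  have hp : p = q := by
    rcases Nat.lt_trichotomy p q with h' | h' | h'
    · have hm : (p + 1) * M ≤ q * M := Nat.mul_le_mul_right M (Nat.succ_le_of_lt h')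
      nlinarith
    · exact h'
    · have hm : (q + 1) * M ≤ p * M := Nat.mul_le_mul_right M (Nat.succ_le_of_lt h')
      nlinarith
  subst hp
  omega

lemma exists_proper_coloring {V : Type u} [Fintype V] (R : V → V → Prop) :
    ∃ c : V → ℕ, (∀ v, c v ≤ 2 * inDegMax R) ∧
      ∀ x y, x ≠ y → (R x y ∨ R y x) → c x ≠ c y := by
  classical
  have hindeg : ∀ (S : Finset V) (q : V), (S.filter fun p => R p q).card ≤ inDegMax R := by
    intro S q
    calc (S.filter fun p => R p q).card
        ≤ (Finset.univ.filter fun p => R p q).card :=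
          Finset.card_le_card (Finset.filter_subset_filter _ (Finset.subset_univ S))
      _ ≤ inDegMax R := by
          unfold inDegMax
          exact Finset.le_sup (f := fun y => (Finset.univ.filter fun x => R x y).card)
            (Finset.mem_univ q)
  set k := inDegMax R with hk
  suffices h : ∀ n (S : Finset V), S.card ≤ n → ∃ c : V → ℕ,
      (∀ v ∈ S, c v ≤ 2 * k) ∧
      ∀ x ∈ S, ∀ y ∈ S, x ≠ y → (R x y ∨ R y x) → c x ≠ c y by
    obtain ⟨c, h1, h2⟩ := h Finset.univ.card Finset.univ le_rfl
    exact ⟨c, fun v => h1 v (Finset.mem_univ v),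
      fun x y => h2 x (Finset.mem_univ x) y (Finset.mem_univ y)⟩
  intro n
  induction n with
  | zero =>
    intro S hS
    have hSe : S = ∅ := Finset.card_eq_zero.1 (Nat.le_zero.1 hS)
    subst hSe
    exact ⟨fun _ => 0, fun v hv => absurd hv (Finset.notMem_empty v),
      fun x hx => absurd hx (Finset.notMem_empty x)⟩
  | succ n ih =>
    intro S hS
    rcases eq_or_ne S ∅ with rfl | hS0
    · exact ⟨fun _ => 0, fun v hv => absurd hv (Finset.notMem_empty v),
        fun x hx => absurd hx (Finset.notMem_empty x)⟩
    have hSne : S.Nonempty := Finset.nonempty_of_ne_empty hS0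
    have hsum : ∑ p ∈ S, (S.filter fun q => q ≠ p ∧ (R q p ∨ R p q)).card
        ≤ 2 * k * S.card := by
      have hsub : ∀ p : V, (S.filter fun q => q ≠ p ∧ (R q p ∨ R p q)) ⊆
          (S.filter fun q => R q p) ∪ (S.filter fun q => R p q) := by
        intro p q hq
        simp only [Finset.mem_filter, Finset.mem_union] at hq ⊢
        tauto
      have hstep : ∀ p : V, (S.filter fun q => q ≠ p ∧ (R q p ∨ R p q)).card ≤
          (S.filter fun q => R q p).card + (S.filter fun q => R p q).card :=
        fun p => le_trans (Finset.card_le_card (hsub p)) (Finset.card_union_le _ _)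
      have hswap : ∑ p ∈ S, (S.filter fun q => R p q).card
          = ∑ q ∈ S, (S.filter fun p => R p q).card := by
        simp only [Finset.card_filter]
        exact Finset.sum_comm
      calc ∑ p ∈ S, (S.filter fun q => q ≠ p ∧ (R q p ∨ R p q)).card
          ≤ ∑ p ∈ S, ((S.filter fun q => R q p).card + (S.filter fun q => R p q).card) :=
            Finset.sum_le_sum fun p _ => hstep p
        _ = ∑ p ∈ S, (S.filter fun q => R q p).card
            + ∑ p ∈ S, (S.filter fun q => R p q).card := Finset.sum_add_distrib
        _ ≤ k * S.card + k * S.card := by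
            apply Nat.add_le_add
            · calc ∑ p ∈ S, (S.filter fun q => R q p).card ≤ ∑ _p ∈ S, k :=
                  Finset.sum_le_sum fun p _ => hindeg S p
                _ = S.card * k := by rw [Finset.sum_const, smul_eq_mul]
                _ = k * S.card := Nat.mul_comm _ _
            · rw [hswap]
              calc ∑ q ∈ S, (S.filter fun p => R p q).card ≤ ∑ _q ∈ S, k :=
                  Finset.sum_le_sum fun q _ => hindeg S q
                _ = S.card * k := by rw [Finset.sum_const, smul_eq_mul]
                _ = k * S.card := Nat.mul_comm _ _
        _ = 2 * k * S.card := by ring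
    have hex : ∃ p ∈ S, (S.filter fun q => q ≠ p ∧ (R q p ∨ R p q)).card ≤ 2 * k := by
      by_contra hcon
      push_neg at hcon
      have hge : ∀ p ∈ S, 2 * k + 1 ≤ (S.filter fun q => q ≠ p ∧ (R q p ∨ R p q)).card :=
        fun p hp => hcon p hp
      have hlow := Finset.card_nsmul_le_sum S _ (2 * k + 1) hge
      rw [smul_eq_mul] at hlow
      have hcard : 1 ≤ S.card := Finset.card_pos.2 hSne
      nlinarith
    obtain ⟨p, hpS, hpdeg⟩ := hex
    obtain ⟨c, hc1, hc2⟩ := ih (S.erase p) (by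
      have := Finset.card_erase_of_mem hpS
      have := Finset.card_pos.2 hSne
      omega)
    have hTcard : (((S.erase p).filter fun q => R q p ∨ R p q).image c).card ≤ 2 * k := by
      calc (((S.erase p).filter fun q => R q p ∨ R p q).image c).card
          ≤ ((S.erase p).filter fun q => R q p ∨ R p q).card := Finset.card_image_le
        _ ≤ (S.filter fun q => q ≠ p ∧ (R q p ∨ R p q)).card := Finset.card_le_card (by
            intro q hq
            simp only [Finset.mem_filter, Finset.mem_erase] at hq ⊢
            exact ⟨hq.1.2, hq.1.1, hq.2⟩)
        _ ≤ 2 * k := hpdeg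
    have hnsub : ¬ Finset.range (2 * k + 1) ⊆ ((S.erase p).filter fun q => R q p ∨ R p q).image c := by
      intro hsub
      have := Finset.card_le_card hsub
      rw [Finset.card_range] at this
      omega
    obtain ⟨mcol, hmr, hmT⟩ := Finset.not_subset.1 hnsub
    rw [Finset.mem_range] at hmr
    refine ⟨Function.update c p mcol, ?_, ?_⟩
    · intro w hw
      rcases eq_or_ne w p with rfl | hwp
      · rw [Function.update_self]
        omega
      · rw [Function.update_of_ne hwp]
        exact hc1 w (Finset.mem_erase.2 ⟨hwp, hw⟩)
    · intro x hx y hy hxy hrel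
      rcases eq_or_ne x p with rfl | hxp
      · rw [Function.update_self, Function.update_of_ne (Ne.symm hxy)]
        intro hcy
        apply hmT
        exact Finset.mem_image.2 ⟨y, Finset.mem_filter.2
          ⟨Finset.mem_erase.2 ⟨Ne.symm hxy, hy⟩, by tauto⟩, hcy.symm⟩
      · rcases eq_or_ne y p with rfl | hyp
        · rw [Function.update_of_ne hxp, Function.update_self]
          intro hcx
          apply hmT
          exact Finset.mem_image.2 ⟨x, Finset.mem_filter.2
            ⟨Finset.mem_erase.2 ⟨hxp, hx⟩, by tauto⟩, hcx⟩
        · rw [Function.update_of_ne hxp, Function.update_of_ne hyp]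
          exact hc2 x (Finset.mem_erase.2 ⟨hxp, hx⟩) y (Finset.mem_erase.2 ⟨hyp, hy⟩) hxy hrel

end AuxColor

/-- Existence of an arc coloring separating the arcs of internally disjoint path pairs. -/
theorem stmt12 {V : Type} [Fintype V] (D : Digr V) (a b : ℕ) (L : V → V → Prop)
    (hL : IsAugmentation D a b L) :
    ∃ φ : V × V → ℕ,
      (∀ x y, D.Adj x y → φ (x, y) < (2 * inDegMax L + 1) * inDegMax D.Adj) ∧
      ∀ (x y z : V) (l1 l2 : List V),
        DiPathBetween D l1 x z → DiPathBetween D l2 y z →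
        l1.length ≤ a + 2 → l2.length ≤ b + 2 → SeparatedPair l1 l2 →
        ∀ e ∈ listArcs l1 ++ listArcs l2, ∀ f ∈ listArcs l1 ++ listArcs l2,
          e ≠ f → φ e ≠ φ f := by
  classical
  obtain ⟨c, hcb, hcp⟩ := exists_proper_coloring L
  obtain ⟨ν, hν_lt, hν_inj⟩ : ∃ ν : V → V → ℕ,
      (∀ p q, D.Adj p q → ν p q < inDegMax D.Adj) ∧
      (∀ p p' q, D.Adj p q → D.Adj p' q → ν p q = ν p' q → p = p') := by
    refine ⟨fun p q => List.idxOf p (Finset.univ.filter fun p' => D.Adj p' q).toList,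
      ?_, ?_⟩
    · intro p q h
      have hmem : p ∈ (Finset.univ.filter fun p' => D.Adj p' q).toList := by
        simp [Finset.mem_toList, h]
      calc List.idxOf p (Finset.univ.filter fun p' => D.Adj p' q).toList
          < (Finset.univ.filter fun p' => D.Adj p' q).toList.length :=
            List.idxOf_lt_length_iff.2 hmem
        _ = (Finset.univ.filter fun p' => D.Adj p' q).card := Finset.length_toList _
        _ ≤ inDegMax D.Adj := by
            unfold inDegMax
            exact Finset.le_sup (f := fun y => (Finset.univ.filter fun x => D.Adj x y).card)
              (Finset.mem_univ q)
    · intro p p' q h h' heq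
      exact (List.idxOf_inj (by simp [Finset.mem_toList, h])).1 heq
  refine ⟨fun e => c e.2 * inDegMax D.Adj + ν e.1 e.2, ?_, ?_⟩
  · intro p q h
    have h1 := hν_lt p q h
    have h2 := hcb q
    calc c q * inDegMax D.Adj + ν p q < c q * inDegMax D.Adj + inDegMax D.Adj := by omega
      _ = (c q + 1) * inDegMax D.Adj := by ring
      _ ≤ (2 * inDegMax L + 1) * inDegMax D.Adj :=
          Nat.mul_le_mul_right _ (by omega)
  · intro x y z l1 l2 hp1 hp2 hl1 hl2 hsep e he f hf hef heq
    obtain ⟨u, v⟩ := e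
    obtain ⟨u', v'⟩ := f
    simp only at heq
    have hDe : D.Adj u v := by
      rcases List.mem_append.1 he with h | h
      · exact rel_of_mem_listArcs hp1.1.2.2 h
      · exact rel_of_mem_listArcs hp2.1.2.2 h
    have hDf : D.Adj u' v' := by
      rcases List.mem_append.1 hf with h | h
      · exact rel_of_mem_listArcs hp1.1.2.2 h
      · exact rel_of_mem_listArcs hp2.1.2.2 h
    obtain ⟨hcvv, hνvv⟩ := mul_add_inj (hν_lt u v hDe) (hν_lt u' v' hDf) heq
    by_cases hv : v = v'
    · subst hv
      exact hef (by rw [hν_inj u u' v hDe hDf hνvv])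
    · have hrel : L v v' ∨ L v' v := by
        rcases key_reach hp1 hp2 hl1 hl2 hsep he hf hv with h | h
        · exact hL v v' h
        · exact (hL v' v h).symm
      exact hcp v v' hv hrel hcvv
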